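/- A geodesic G of S² × ℝ is horizontal if and only if there exists a geodesic G' of S² × ℝ with G' ≠ G such that the intersection G ∩ G' has exactly two elements. -/

import Mathlib

open scoped RealInnerProductSpace

/-- Euclidean 3-space. -/
abbrev E3 : Type := EuclideanSpace ℝ (Fin 3)

/-- The unit sphere `S² ⊆ ℝ³`. -/
abbrev S2 : Type := Metric.sphere (0 : E3) 1

/-- A geodesic of `S² × ℝ`: a set of the form
`{(cos(α t) • u + sin(α t) • v, β t + c) | t ∈ ℝ}` where `u, v ∈ S²` are orthogonal,
`c ∈ ℝ`, and `(α, β) ≠ (0, 0)`. -/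
def IsSphGeodesic (G : Set (S2 × ℝ)) : Prop :=
  ∃ (u v : S2) (α β c : ℝ), ⟪(u : E3), (v : E3)⟫ = 0 ∧ (α, β) ≠ ((0 : ℝ), (0 : ℝ)) ∧
    G = {q : S2 × ℝ | ∃ t : ℝ,
      (q.1 : E3) = Real.cos (α * t) • (u : E3) + Real.sin (α * t) • (v : E3) ∧
      q.2 = β * t + c}

/-- A geodesic of `S² × ℝ` is horizontal if it is contained in `S² × {r}` for some `r`. -/
def IsHorizontalSphGeodesic (G : Set (S2 × ℝ)) : Prop :=
  IsSphGeodesic G ∧ ∃ r : ℝ, G ⊆ {q : S2 × ℝ | q.2 = r}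

/-- A geodesic of `S² × ℝ` is vertical if it equals `{p} × ℝ` for some `p ∈ S²`. -/
def IsVerticalSphGeodesic (G : Set (S2 × ℝ)) : Prop :=
  IsSphGeodesic G ∧ ∃ p : S2, G = {q : S2 × ℝ | q.1 = p}

/-- A geodesic of `S² × ℝ` is slant if it is neither horizontal nor vertical. -/
def IsSlantSphGeodesic (G : Set (S2 × ℝ)) : Prop :=
  IsSphGeodesic G ∧ ¬ IsHorizontalSphGeodesic G ∧ ¬ IsVerticalSphGeodesic G

/-- A geodesic of `S² × ℝ` is horizontal if and only if there is another geodesic meeting it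
in exactly two points. -/
lemma inner_self_S2 (u : S2) : ⟪(u:E3), (u:E3)⟫ = 1 := by
  have h : ‖(u:E3)‖ = 1 := by simpa using mem_sphere_zero_iff_norm.mp u.2
  rw [real_inner_self_eq_norm_sq, h]; norm_num

lemma inner_circle {u v : E3} (hu : ⟪u,u⟫ = 1) (hv : ⟪v,v⟫ = 1) (huv : ⟪u,v⟫ = 0) (θ φ : ℝ) :
    ⟪Real.cos θ • u + Real.sin θ • v, Real.cos φ • u + Real.sin φ • v⟫ = Real.cos (θ - φ) := by
  have hvu : ⟪v,u⟫ = 0 := by rw [real_inner_comm]; exact huv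
  simp only [inner_add_left, inner_add_right, real_inner_smul_left, real_inner_smul_right,
    hu, hv, huv, hvu, Real.cos_sub]
  ring

lemma circle_mem_sphere {u v : E3} (hu : ⟪u,u⟫ = 1) (hv : ⟪v,v⟫ = 1) (huv : ⟪u,v⟫ = 0) (θ : ℝ) :
    Real.cos θ • u + Real.sin θ • v ∈ Metric.sphere (0:E3) 1 := by
  rw [mem_sphere_zero_iff_norm]
  have h : ⟪Real.cos θ • u + Real.sin θ • v, Real.cos θ • u + Real.sin θ • v⟫ = 1 := by
    rw [inner_circle hu hv huv θ θ]; simp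
  rw [real_inner_self_eq_norm_sq] at h
  have h0 := norm_nonneg (Real.cos θ • u + Real.sin θ • v)
  nlinarith

lemma cos_add_gen (s x : ℝ) :
    Real.cos (s+x) = 2*Real.cos s*Real.cos x - Real.cos (x-s) := by
  rw [Real.cos_add, Real.cos_sub]; ring

lemma sin_add_gen (s x : ℝ) :
    Real.sin (s+x) = 2*Real.cos s*Real.sin x - Real.sin (x-s) := by
  rw [Real.sin_add, Real.sin_sub]; ring

lemma cos_two_sub (x y : ℝ) :
    Real.cos (2*x - y) = 2*Real.cos (x-y)*Real.cos x - Real.cos y := by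
  have h := cos_add_gen (x-y) x
  rw [show (x-y)+x = 2*x - y by ring, show x - (x-y) = y by ring] at h
  exact h

lemma sin_two_sub (x y : ℝ) :
    Real.sin (2*x - y) = 2*Real.cos (x-y)*Real.sin x - Real.sin y := by
  have h := sin_add_gen (x-y) x
  rw [show (x-y)+x = 2*x - y by ring, show x - (x-y) = y by ring] at h
  exact h

lemma circle_shift {u v u' v' : E3}
    (hu : ⟪u,u⟫=1) (hv : ⟪v,v⟫=1) (huv : ⟪u,v⟫=0)
    (hu' : ⟪u',u'⟫=1) (hv' : ⟪v',v'⟫=1) (huv' : ⟪u',v'⟫=0)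
    {x1 x2 y1 y2 : ℝ}
    (h1 : Real.cos x1 • u + Real.sin x1 • v = Real.cos y1 • u' + Real.sin y1 • v')
    (h2 : Real.cos x2 • u + Real.sin x2 • v = Real.cos y2 • u' + Real.sin y2 • v') :
    Real.cos (2*x1 - x2) • u + Real.sin (2*x1 - x2) • v
      = Real.cos (2*y1 - y2) • u' + Real.sin (2*y1 - y2) • v' := by
  have hc : Real.cos (x1 - x2) = Real.cos (y1 - y2) := by
    rw [← inner_circle hu hv huv x1 x2, h1, h2, inner_circle hu' hv' huv' y1 y2]
  calc Real.cos (2*x1 - x2) • u + Real.sin (2*x1 - x2) • v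
      = (2*Real.cos (x1-x2)) • (Real.cos x1 • u + Real.sin x1 • v)
        - (Real.cos x2 • u + Real.sin x2 • v) := by
        rw [cos_two_sub, sin_two_sub]; module
    _ = (2*Real.cos (y1-y2)) • (Real.cos y1 • u' + Real.sin y1 • v')
        - (Real.cos y2 • u' + Real.sin y2 • v') := by rw [h1, h2, hc]
    _ = Real.cos (2*y1 - y2) • u' + Real.sin (2*y1 - y2) • v' := by
        rw [cos_two_sub, sin_two_sub]; module

lemma exists_unit_orthogonal (u v : E3) :
    ∃ w : E3, ⟪w,w⟫ = 1 ∧ ⟪u, w⟫ = 0 ∧ ⟪v, w⟫ = 0 := by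
  classical
  have hspan : (Submodule.span ℝ ({u, v} : Set E3)) ≠ ⊤ := by
    intro h
    have h1 := finrank_span_le_card (R := ℝ) ({u, v} : Set E3)
    have h2 : ({u, v} : Set E3).toFinset.card ≤ 2 := by
      rw [Set.toFinset_insert, Set.toFinset_singleton]
      exact (Finset.card_insert_le _ _).trans (by simp)
    rw [h, finrank_top] at h1
    have h3 : Module.finrank ℝ E3 = 3 := by simp [finrank_euclideanSpace]
    omega
  have hbot : (Submodule.span ℝ ({u, v} : Set E3))ᗮ ≠ ⊥ := by
    intro h
    exact hspan (Submodule.orthogonal_eq_bot_iff.mp h)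
  obtain ⟨w0, hw0mem, hw0ne⟩ := Submodule.exists_mem_ne_zero_of_ne_bot hbot
  have hn : ‖w0‖ ≠ 0 := norm_ne_zero_iff.mpr hw0ne
  have hu0 : ⟪u, w0⟫ = 0 := (Submodule.mem_orthogonal _ _).mp hw0mem u (Submodule.subset_span (by simp))
  have hv0 : ⟪v, w0⟫ = 0 := (Submodule.mem_orthogonal _ _).mp hw0mem v (Submodule.subset_span (by simp))
  refine ⟨‖w0‖⁻¹ • w0, ?_, ?_, ?_⟩
  · rw [real_inner_smul_left, real_inner_smul_right, real_inner_self_eq_norm_sq]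
    field_simp
  · rw [real_inner_smul_right, hu0, mul_zero]
  · rw [real_inner_smul_right, hv0, mul_zero]

theorem sphere_times_real_horizontal_iff_two_point_intersection
    (G : Set (S2 × ℝ)) (hG : IsSphGeodesic G) :
    IsHorizontalSphGeodesic G ↔
      ∃ G' : Set (S2 × ℝ), IsSphGeodesic G' ∧ G' ≠ G ∧
        ∃ a b : S2 × ℝ, a ≠ b ∧ G ∩ G' = {a, b} := by
  obtain ⟨u, v, α, β, c, huv, hαβ, hGeq⟩ := hG
  have huu : ⟪(u:E3),(u:E3)⟫ = 1 := inner_self_S2 u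
  have hvv : ⟪(v:E3),(v:E3)⟫ = 1 := inner_self_S2 v
  have hvu : ⟪(v:E3),(u:E3)⟫ = 0 := by rw [real_inner_comm]; exact huv
  constructor
  · rintro ⟨-, r, hsub⟩
    have hmem : ∀ t : ℝ,
        ((⟨_, circle_mem_sphere huu hvv huv (α*t)⟩ : S2), β*t+c) ∈ G := by
      intro t; rw [hGeq]; exact ⟨t, rfl, rfl⟩
    have hβ : β = 0 := by
      have h0 := hsub (hmem 0)
      have h1 := hsub (hmem 1)
      simp only [Set.mem_setOf_eq] at h0 h1
      linarith
    subst hβ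
    have hα : α ≠ 0 := by rintro rfl; exact hαβ rfl
    obtain ⟨w, hww, huw, hvw⟩ := exists_unit_orthogonal (u:E3) (v:E3)
    have hwv : ⟪w, (v:E3)⟫ = 0 := by rw [real_inner_comm]; exact hvw
    have hwu : ⟪w, (u:E3)⟫ = 0 := by rw [real_inner_comm]; exact huw
    have hwS2 : w ∈ Metric.sphere (0:E3) 1 := by
      rw [mem_sphere_zero_iff_norm]
      rw [real_inner_self_eq_norm_sq] at hww
      have := norm_nonneg w; nlinarith
    set wS : S2 := ⟨w, hwS2⟩ with hwSdef
    have hnegu : -(u:E3) ∈ Metric.sphere (0:E3) 1 := by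
      rw [mem_sphere_zero_iff_norm, norm_neg]
      simpa using mem_sphere_zero_iff_norm.mp u.2
    set a : S2 × ℝ := (u, c) with hadef
    set b : S2 × ℝ := (⟨-(u:E3), hnegu⟩, c) with hbdef
    refine ⟨{q : S2 × ℝ | ∃ t : ℝ,
        (q.1 : E3) = Real.cos (1 * t) • (u:E3) + Real.sin (1 * t) • w ∧
        q.2 = 0 * t + c},
      ⟨u, wS, 1, 0, c, huw, by simp, rfl⟩, ?_, a, b, ?_, ?_⟩
    · -- G' ≠ G
      intro hEq
      have hwmem : ((wS, c) : S2 × ℝ) ∈ {q : S2 × ℝ | ∃ t : ℝ,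
          (q.1 : E3) = Real.cos (1 * t) • (u:E3) + Real.sin (1 * t) • w ∧
          q.2 = 0 * t + c} := by
        refine ⟨Real.pi/2, ?_, by ring⟩
        simp [Real.cos_pi_div_two, Real.sin_pi_div_two, hwSdef]
      rw [hEq, hGeq] at hwmem
      obtain ⟨s, h1, h2⟩ := hwmem
      have h3 := congrArg (fun x => (⟪x, w⟫ : ℝ)) h1
      simp only [inner_add_left, real_inner_smul_left, huw, hvw, hww,
        mul_zero, add_zero, mul_one] at h3
      simp only [hwSdef, hww, one_ne_zero] at h3
    · -- a ≠ b
      intro hEq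
      have h1 : (u:E3) = -(u:E3) := congrArg (fun p => ((p.1 : S2) : E3)) hEq
      have h2 : (u:E3) = 0 := by
        have := congrArg (fun x => (⟪x, (u:E3)⟫ : ℝ)) h1
        simp only [inner_neg_left, huu] at this
        linarith [huu, this]
      rw [h2] at huu; simp at huu
    · -- intersection
      ext q
      simp only [Set.mem_inter_iff, Set.mem_insert_iff, Set.mem_singleton_iff]
      constructor
      · rintro ⟨hqG, hqG'⟩
        rw [hGeq] at hqG
        obtain ⟨s, h1, h2⟩ := hqG
        obtain ⟨t, h1', h2'⟩ := hqG'
        have hE : Real.cos (α*s) • (u:E3) + Real.sin (α*s) • (v:E3)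
            = Real.cos (1*t) • (u:E3) + Real.sin (1*t) • w := h1.symm.trans h1'
        have hsv : Real.sin (α*s) = 0 := by
          have h3 := congrArg (fun x => (⟪x, (v:E3)⟫ : ℝ)) hE
          simp only [inner_add_left, real_inner_smul_left, huv, hvv, hwv,
            mul_zero, mul_one, zero_add, add_zero] at h3
          exact h3
        have hcos : Real.cos (α*s) = 1 ∨ Real.cos (α*s) = -1 := by
          have hpyth := Real.sin_sq_add_cos_sq (α*s)
          have : (Real.cos (α*s) - 1) * (Real.cos (α*s) + 1) = 0 := by nlinarith
          rcases mul_eq_zero.mp this with h | h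
          · left; linarith
          · right; linarith
        have hq2 : q.2 = c := by rw [h2]; ring
        rcases hcos with h | h
        · left
          apply Prod.ext
          · apply Subtype.ext
            rw [h1, hsv, h]
            simp [hadef]
          · simpa [hadef] using hq2
        · right
          apply Prod.ext
          · apply Subtype.ext
            rw [h1, hsv, h]
            simp [hbdef]
          · simpa [hbdef] using hq2
      · rintro (rfl | rfl)
        · constructor
          · rw [hGeq]
            exact ⟨0, by simp [hadef], by simp [hadef]⟩
          · exact ⟨0, by simp [hadef], by simp [hadef]⟩
        · constructor
          · rw [hGeq]
            refine ⟨Real.pi/α, ?_, by simp [hbdef]⟩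
            rw [mul_div_cancel₀ _ hα]
            simp [hbdef]
          · refine ⟨Real.pi, ?_, by simp [hbdef]⟩
            rw [one_mul]
            simp [hbdef]
  · rintro ⟨G', hG', -, a, b, hab, hint⟩
    refine ⟨⟨u, v, α, β, c, huv, hαβ, hGeq⟩, c, ?_⟩
    suffices hβ : β = 0 by
      subst hβ
      intro q hq
      rw [hGeq] at hq
      obtain ⟨t, -, h2⟩ := hq
      show q.2 = c
      rw [h2]; ring
    by_contra hβ
    obtain ⟨u', v', α', β', c', huv', hαβ', hGeq'⟩ := hG'
    have huu' : ⟪(u':E3),(u':E3)⟫ = 1 := inner_self_S2 u'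
    have hvv' : ⟪(v':E3),(v':E3)⟫ = 1 := inner_self_S2 v'
    have haG : a ∈ G ∧ a ∈ G' := by
      have : a ∈ G ∩ G' := by rw [hint]; exact Set.mem_insert _ _
      exact this
    have hbG : b ∈ G ∧ b ∈ G' := by
      have : b ∈ G ∩ G' := by rw [hint]; exact Set.mem_insert_of_mem _ rfl
      exact this
    obtain ⟨s1, ha1, ha2⟩ := hGeq ▸ haG.1
    obtain ⟨t1, ha1', ha2'⟩ := hGeq' ▸ haG.2
    obtain ⟨s2, hb1, hb2⟩ := hGeq ▸ hbG.1
    obtain ⟨t2, hb1', hb2'⟩ := hGeq' ▸ hbG.2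
    have hs12 : s1 ≠ s2 := by
      rintro rfl
      exact hab (Prod.ext (Subtype.ext (ha1.trans hb1.symm)) (ha2.trans hb2.symm))
    have key := circle_shift huu hvv huv huu' hvv' huv'
      (ha1.symm.trans ha1') (hb1.symm.trans hb1')
    set s3 : ℝ := 2*s1 - s2 with hs3
    set t3 : ℝ := 2*t1 - t2 with ht3
    have hxs : α * s3 = 2*(α*s1) - α*s2 := by rw [hs3]; ring
    have hxt : α' * t3 = 2*(α'*t1) - α'*t2 := by rw [ht3]; ring
    set x : S2 × ℝ := (⟨Real.cos (α*s3) • (u:E3) + Real.sin (α*s3) • (v:E3),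
      circle_mem_sphere huu hvv huv (α*s3)⟩, β*s3+c) with hxdef
    have hxG : x ∈ G := by rw [hGeq]; exact ⟨s3, rfl, rfl⟩
    have hxG' : x ∈ G' := by
      rw [hGeq']
      refine ⟨t3, ?_, ?_⟩
      · show Real.cos (α*s3) • (u:E3) + Real.sin (α*s3) • (v:E3)
          = Real.cos (α'*t3) • (u':E3) + Real.sin (α'*t3) • (v':E3)
        rw [hxs, hxt]
        exact key
      · show β*s3+c = β'*t3 + c'
        have e1 : β*s1 + c = β'*t1 + c' := ha2.symm.trans ha2'
        have e2 : β*s2 + c = β'*t2 + c' := hb2.symm.trans hb2'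
        rw [hs3, ht3]
        linear_combination 2*e1 - e2
    have hx : x = a ∨ x = b := by
      have : x ∈ G ∩ G' := ⟨hxG, hxG'⟩
      rw [hint] at this
      exact this
    rcases hx with h | h
    · have h2 : x.2 = a.2 := congrArg Prod.snd h
      have : β*s3 + c = β*s1 + c := by rw [← ha2]; exact h2
      have hs : s1 = s2 := by
        have hβs : β*(s1 - s2) = 0 := by rw [hs3] at this; linarith
        rcases mul_eq_zero.mp hβs with h' | h'
        · exact absurd h' hβ
        · linarith
      exact hs12 hs
    · have h2 : x.2 = b.2 := congrArg Prod.snd h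
      have : β*s3 + c = β*s2 + c := by rw [← hb2]; exact h2
      have hs : s1 = s2 := by
        have hβs : (2*β)*(s1 - s2) = 0 := by rw [hs3] at this; linarith
        rcases mul_eq_zero.mp hβs with h' | h'
        · exact absurd (by linarith : β = 0) hβ
        · linarith
      exact hs12 hs
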